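/- Let a_0 > a_1 > ... > a_N > 0 and let C_j be real coefficients, not all zero. If the sequence C_0, C_1, ..., C_N (ignoring zero entries) has at most two sign changes, then f(x) = ∑_{j=0}^N C_j·a_j^x has at most two real zeros. -/

import Mathlib

open Finset Real

/-- The set of (consecutive-nonzero) sign-change pairs. -/
private noncomputable def SP (N : ℕ) (C : ℕ → ℝ) : Finset (ℕ × ℕ) :=
  (Finset.range (N + 1) ×ˢ Finset.range (N + 1)).filter
    (fun p => p.1 < p.2 ∧ C p.1 * C p.2 < 0 ∧
      ∀ j ∈ Finset.Ioo p.1 p.2, C j = 0)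

private lemma adjacent_aux (C : ℕ → ℝ) : ∀ d i k, k - i ≤ d → i < k → C i * C k < 0 →
    ∃ p q, i ≤ p ∧ p < q ∧ q ≤ k ∧ C p * C q < 0 ∧ ∀ j ∈ Finset.Ioo p q, C j = 0 := by
  intro d
  induction d with
  | zero => intro i k h hik _; omega
  | succ d ih =>
    intro i k h hik hC
    by_cases hall : ∀ j ∈ Finset.Ioo i k, C j = 0
    · exact ⟨i, k, le_refl _, hik, le_refl _, hC, hall⟩
    · push_neg at hall
      obtain ⟨j, hj, hj0⟩ := hall
      rw [Finset.mem_Ioo] at hj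
      have hsplit : C i * C j < 0 ∨ C j * C k < 0 := by
        by_contra hcon
        push_neg at hcon
        nlinarith [hcon.1, hcon.2, mul_self_pos.mpr hj0]
      rcases hsplit with h' | h'
      · obtain ⟨p, q, hp, hpq, hq, rest⟩ := ih i j (by omega) hj.1 h'
        exact ⟨p, q, hp, hpq, by omega, rest⟩
      · obtain ⟨p, q, hp, hpq, hq, rest⟩ := ih j k (by omega) hj.2 h'
        exact ⟨p, q, by omega, hpq, hq, rest⟩

/-- Any opposite-sign pair yields a member of `SP` between its indices. -/
private lemma opp_mem (N : ℕ) (C : ℕ → ℝ) {i k : ℕ} (hik : i < k) (hk : k ≤ N)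
    (hC : C i * C k < 0) :
    ∃ p q, i ≤ p ∧ p < q ∧ q ≤ k ∧ (p, q) ∈ SP N C := by
  obtain ⟨p, q, hp, hpq, hq, hCpq, hz⟩ := adjacent_aux C (k - i) i k le_rfl hik hC
  refine ⟨p, q, hp, hpq, hq, ?_⟩
  rw [SP, Finset.mem_filter, Finset.mem_product, Finset.mem_range, Finset.mem_range]
  exact ⟨⟨by omega, by omega⟩, hpq, hCpq, hz⟩

private lemma expsum_deriv (N : ℕ) (b C : ℕ → ℝ) (hb : ∀ j ≤ N, 0 < b j) (t : ℝ) :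
    HasDerivAt (fun t => ∑ j ∈ Finset.range (N + 1), C j * b j ^ t)
      (∑ j ∈ Finset.range (N + 1), (C j * Real.log (b j)) * b j ^ t) t := by
  apply HasDerivAt.fun_sum
  intro j hj
  have hbj : 0 < b j := hb j (by simpa [Nat.lt_succ_iff] using Finset.mem_range.mp hj)
  have h0 : HasDerivAt (fun t : ℝ => b j ^ t) (b j ^ t * Real.log (b j)) t :=
    (Real.hasStrictDerivAt_const_rpow hbj t).hasDerivAt
  have := h0.const_mul (C j)
  convert this using 1
  · rfl
  ring

/-- An exponential sum whose coefficients all (weakly) share a sign, with some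
nonzero coefficient, never vanishes. -/
private lemma L0 (N : ℕ) (b C : ℕ → ℝ) (hb : ∀ j ≤ N, 0 < b j)
    (hnn : ∀ p q, p ≤ N → q ≤ N → 0 ≤ C p * C q)
    (m : ℕ) (hm : m ≤ N) (hm0 : C m ≠ 0) (t : ℝ) :
    ∑ j ∈ Finset.range (N + 1), C j * b j ^ t ≠ 0 := by
  intro h
  have key : 0 < ∑ j ∈ Finset.range (N + 1), (C m * C j) * b j ^ t := by
    apply Finset.sum_pos'
    · intro j hj
      have hjN : j ≤ N := by simpa [Nat.lt_succ_iff] using Finset.mem_range.mp hj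
      exact mul_nonneg (hnn m j hm hjN) (Real.rpow_pos_of_pos (hb j hjN) t).le
    · exact ⟨m, Finset.mem_range.mpr (by omega),
        mul_pos (mul_self_pos.mpr hm0) (Real.rpow_pos_of_pos (hb m hm) t)⟩
  have e : ∑ j ∈ Finset.range (N + 1), (C m * C j) * b j ^ t
      = C m * ∑ j ∈ Finset.range (N + 1), C j * b j ^ t := by
    rw [Finset.mul_sum]; exact Finset.sum_congr rfl (fun j _ => by ring)
  rw [e, h, mul_zero] at key
  exact lt_irrefl _ key

private lemma anti_le (N : ℕ) (b : ℕ → ℝ) (hanti : ∀ i j, i < j → j ≤ N → b j < b i)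
    {p q : ℕ} (hpq : p ≤ q) (hq : q ≤ N) : b q ≤ b p := by
  rcases eq_or_lt_of_le hpq with h | h
  · rw [h]
  · exact (hanti p q h hq).le

private lemma zero_div_pow (N : ℕ) (b C : ℕ → ℝ) (μ : ℝ) (hb : ∀ j ≤ N, 0 < b j)
    (hμ : 0 < μ) (t : ℝ) (h : ∑ j ∈ Finset.range (N + 1), C j * b j ^ t = 0) :
    ∑ j ∈ Finset.range (N + 1), C j * (b j / μ) ^ t = 0 := by
  have e : ∀ j ∈ Finset.range (N + 1),
      C j * (b j / μ) ^ t = (C j * b j ^ t) * (μ ^ t)⁻¹ := by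
    intro j hj
    have hjN : j ≤ N := by simpa [Nat.lt_succ_iff] using Finset.mem_range.mp hj
    rw [Real.div_rpow (hb j hjN).le hμ.le]
    ring
  rw [Finset.sum_congr rfl e, ← Finset.sum_mul, h, zero_mul]

/-- One sign change (with threshold `M`) implies at most one zero. -/
private lemma L1 (N : ℕ) (b C : ℕ → ℝ) (M : ℕ) (hMN : M < N)
    (hb : ∀ j ≤ N, 0 < b j) (hanti : ∀ i j, i < j → j ≤ N → b j < b i)
    (h1 : ∀ p q, p ≤ M → q ≤ M → 0 ≤ C p * C q)
    (h2 : ∀ p q, M < p → p ≤ N → M < q → q ≤ N → 0 ≤ C p * C q)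
    (h3 : ∀ p q, p ≤ M → M < q → q ≤ N → C p * C q ≤ 0)
    (m : ℕ) (hm : m ≤ N) (hm0 : C m ≠ 0)
    (x y : ℝ) (hxy : x < y)
    (hfx : ∑ j ∈ Finset.range (N + 1), C j * b j ^ x = 0)
    (hfy : ∑ j ∈ Finset.range (N + 1), C j * b j ^ y = 0) : False := by
  set μ := (b M + b (M + 1)) / 2 with hμdef
  have hbM : 0 < b M := hb M (by omega)
  have hbM1 : 0 < b (M + 1) := hb (M + 1) (by omega)
  have hstep : b (M + 1) < b M := hanti M (M + 1) (by omega) (by omega)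
  have hμpos : 0 < μ := by rw [hμdef]; linarith
  have hμlt : μ < b M := by rw [hμdef]; linarith
  have hμgt : b (M + 1) < μ := by rw [hμdef]; linarith
  have hlt : ∀ p ≤ M, μ < b p := fun p hp =>
    lt_of_lt_of_le hμlt (anti_le N b hanti hp (by omega))
  have hgt : ∀ q, M < q → q ≤ N → b q < μ := fun q hq hqN =>
    lt_of_le_of_lt (anti_le N b hanti hq hqN) hμgt
  have hb' : ∀ j ≤ N, 0 < b j / μ := fun j hj => div_pos (hb j hj) hμpos
  have hLpos : ∀ p ≤ M, 0 < Real.log (b p / μ) := fun p hp =>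
    Real.log_pos ((one_lt_div hμpos).mpr (hlt p hp))
  have hLneg : ∀ q, M < q → q ≤ N → Real.log (b q / μ) < 0 := fun q hq hqN =>
    Real.log_neg (hb' q hqN) ((div_lt_one hμpos).mpr (hgt q hq hqN))
  have hgx : ∑ j ∈ Finset.range (N + 1), C j * (b j / μ) ^ x = 0 :=
    zero_div_pow N b C μ hb hμpos x hfx
  have hgy : ∑ j ∈ Finset.range (N + 1), C j * (b j / μ) ^ y = 0 :=
    zero_div_pow N b C μ hb hμpos y hfy
  have hd : ∀ t : ℝ, HasDerivAt (fun t => ∑ j ∈ Finset.range (N + 1), C j * (b j / μ) ^ t)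
      (∑ j ∈ Finset.range (N + 1), (C j * Real.log (b j / μ)) * (b j / μ) ^ t) t :=
    fun t => expsum_deriv N (fun j => b j / μ) C hb' t
  obtain ⟨c, _, hc0⟩ := exists_hasDerivAt_eq_zero hxy
    (fun t _ => (hd t).continuousAt.continuousWithinAt) (hgx.trans hgy.symm) (fun t _ => hd t)
  refine L0 N (fun j => b j / μ) (fun j => C j * Real.log (b j / μ)) hb' ?_ m hm ?_ c hc0
  · intro p q hp hq
    rcases le_or_gt p M with hpM | hpM <;> rcases le_or_gt q M with hqM | hqM
    · nlinarith [h1 p q hpM hqM, mul_pos (hLpos p hpM) (hLpos q hqM)]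
    · nlinarith [h3 p q hpM hqM hq, mul_neg_of_pos_of_neg (hLpos p hpM) (hLneg q hqM hq)]
    · nlinarith [h3 q p hqM hpM hp, mul_neg_of_pos_of_neg (hLpos q hqM) (hLneg p hpM hp)]
    · nlinarith [h2 p q hpM hp hqM hq, mul_pos_of_neg_of_neg (hLneg p hpM hp) (hLneg q hqM hq)]
  · rcases le_or_gt m M with h | h
    · exact mul_ne_zero hm0 (ne_of_gt (hLpos m h))
    · exact mul_ne_zero hm0 (ne_of_lt (hLneg m h hm))

set_option maxHeartbeats 1000000 in
/-- Two sign changes (thresholds `M1 < M2`) imply at most two zeros. -/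
private lemma L2 (N : ℕ) (b C : ℕ → ℝ) (M1 M2 : ℕ) (hM12 : M1 < M2) (hM2N : M2 < N)
    (hb : ∀ j ≤ N, 0 < b j) (hanti : ∀ i j, i < j → j ≤ N → b j < b i)
    (g1 : ∀ p q, p ≤ M1 → q ≤ M1 → 0 ≤ C p * C q)
    (g2 : ∀ p q, M1 < p → p ≤ M2 → M1 < q → q ≤ M2 → 0 ≤ C p * C q)
    (g3 : ∀ p q, M2 < p → p ≤ N → M2 < q → q ≤ N → 0 ≤ C p * C q)
    (g4 : ∀ p q, p ≤ M1 → M1 < q → q ≤ M2 → C p * C q ≤ 0)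
    (g5 : ∀ p q, M1 < p → p ≤ M2 → M2 < q → q ≤ N → C p * C q ≤ 0)
    (g6 : ∀ p q, p ≤ M1 → M2 < q → q ≤ N → 0 ≤ C p * C q)
    (m : ℕ) (hmM1 : M1 < m) (hmM2 : m ≤ M2) (hm0 : C m ≠ 0)
    (x y z : ℝ) (hxy : x < y) (hyz : y < z)
    (hfx : ∑ j ∈ Finset.range (N + 1), C j * b j ^ x = 0)
    (hfy : ∑ j ∈ Finset.range (N + 1), C j * b j ^ y = 0)
    (hfz : ∑ j ∈ Finset.range (N + 1), C j * b j ^ z = 0) : False := by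
  set μ := (b M1 + b (M1 + 1)) / 2 with hμdef
  have hbM : 0 < b M1 := hb M1 (by omega)
  have hbM1 : 0 < b (M1 + 1) := hb (M1 + 1) (by omega)
  have hstep : b (M1 + 1) < b M1 := hanti M1 (M1 + 1) (by omega) (by omega)
  have hμpos : 0 < μ := by rw [hμdef]; linarith
  have hμlt : μ < b M1 := by rw [hμdef]; linarith
  have hμgt : b (M1 + 1) < μ := by rw [hμdef]; linarith
  have hlt : ∀ p ≤ M1, μ < b p := fun p hp =>
    lt_of_lt_of_le hμlt (anti_le N b hanti hp (by omega))
  have hgt : ∀ q, M1 < q → q ≤ N → b q < μ := fun q hq hqN =>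
    lt_of_le_of_lt (anti_le N b hanti hq hqN) hμgt
  have hb' : ∀ j ≤ N, 0 < b j / μ := fun j hj => div_pos (hb j hj) hμpos
  have hanti' : ∀ i j, i < j → j ≤ N → b j / μ < b i / μ := fun i j hij hj =>
    (div_lt_div_iff_of_pos_right hμpos).mpr (hanti i j hij hj)
  have hLpos : ∀ p ≤ M1, 0 < Real.log (b p / μ) := fun p hp =>
    Real.log_pos ((one_lt_div hμpos).mpr (hlt p hp))
  have hLneg : ∀ q, M1 < q → q ≤ N → Real.log (b q / μ) < 0 := fun q hq hqN =>
    Real.log_neg (hb' q hqN) ((div_lt_one hμpos).mpr (hgt q hq hqN))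
  have hgx : ∑ j ∈ Finset.range (N + 1), C j * (b j / μ) ^ x = 0 :=
    zero_div_pow N b C μ hb hμpos x hfx
  have hgy : ∑ j ∈ Finset.range (N + 1), C j * (b j / μ) ^ y = 0 :=
    zero_div_pow N b C μ hb hμpos y hfy
  have hgz : ∑ j ∈ Finset.range (N + 1), C j * (b j / μ) ^ z = 0 :=
    zero_div_pow N b C μ hb hμpos z hfz
  have hd : ∀ t : ℝ, HasDerivAt (fun t => ∑ j ∈ Finset.range (N + 1), C j * (b j / μ) ^ t)
      (∑ j ∈ Finset.range (N + 1), (C j * Real.log (b j / μ)) * (b j / μ) ^ t) t :=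
    fun t => expsum_deriv N (fun j => b j / μ) C hb' t
  obtain ⟨c1, hc1, hc10⟩ := exists_hasDerivAt_eq_zero hxy
    (fun t _ => (hd t).continuousAt.continuousWithinAt) (hgx.trans hgy.symm) (fun t _ => hd t)
  obtain ⟨c2, hc2, hc20⟩ := exists_hasDerivAt_eq_zero hyz
    (fun t _ => (hd t).continuousAt.continuousWithinAt) (hgy.trans hgz.symm) (fun t _ => hd t)
  have hc12 : c1 < c2 := lt_trans hc1.2 hc2.1
  refine L1 N (fun j => b j / μ) (fun j => C j * Real.log (b j / μ)) M2 hM2N hb' hanti'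
    ?_ ?_ ?_ m (by omega) ?_ c1 c2 hc12 hc10 hc20
  · -- p, q ≤ M2
    intro p q hp hq
    rcases le_or_gt p M1 with hpM | hpM <;> rcases le_or_gt q M1 with hqM | hqM
    · nlinarith [g1 p q hpM hqM, mul_pos (hLpos p hpM) (hLpos q hqM)]
    · nlinarith [g4 p q hpM hqM hq,
        mul_neg_of_pos_of_neg (hLpos p hpM) (hLneg q hqM (by omega))]
    · nlinarith [g4 q p hqM hpM hp,
        mul_neg_of_pos_of_neg (hLpos q hqM) (hLneg p hpM (by omega))]
    · nlinarith [g2 p q hpM hp hqM hq,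
        mul_pos_of_neg_of_neg (hLneg p hpM (by omega)) (hLneg q hqM (by omega))]
  · -- M2 < p, q ≤ N
    intro p q hp hpN hq hqN
    nlinarith [g3 p q hp hpN hq hqN,
      mul_pos_of_neg_of_neg (hLneg p (by omega) hpN) (hLneg q (by omega) hqN)]
  · -- p ≤ M2 < q
    intro p q hp hq hqN
    rcases le_or_gt p M1 with hpM | hpM
    · nlinarith [g6 p q hpM hq hqN,
        mul_neg_of_pos_of_neg (hLpos p hpM) (hLneg q (by omega) hqN)]
    · nlinarith [g5 p q hpM hp hq hqN,
        mul_pos_of_neg_of_neg (hLneg p hpM (by omega)) (hLneg q (by omega) hqN)]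
  · exact mul_ne_zero hm0 (ne_of_lt (hLneg m hmM1 (by omega)))

private lemma SP_mem_elim (N : ℕ) (C : ℕ → ℝ) {p : ℕ × ℕ} (h : p ∈ SP N C) :
    p.1 < p.2 ∧ p.2 ≤ N ∧ C p.1 * C p.2 < 0 ∧ ∀ j ∈ Finset.Ioo p.1 p.2, C j = 0 := by
  rw [SP, Finset.mem_filter, Finset.mem_product, Finset.mem_range, Finset.mem_range] at h
  exact ⟨h.2.1, by omega, h.2.2.1, h.2.2.2⟩

private lemma nz_of_neg {u v : ℝ} (h : u * v < 0) : u ≠ 0 ∧ v ≠ 0 := by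
  constructor <;> rintro rfl <;> simp at h

set_option maxHeartbeats 1000000 in
private lemma key2 (N : ℕ) (a C : ℕ → ℝ)
    (ha_pos : ∀ j ≤ N, 0 < a j)
    (ha_anti : ∀ i j, i < j → j ≤ N → a j < a i)
    (i1 k1 i2 k2 : ℕ) (h11 : i1 < k1) (h1122 : k1 ≤ i2) (h22 : i2 < k2) (hk2N : k2 ≤ N)
    (hC1 : C i1 * C k1 < 0) (hC2 : C i2 * C k2 < 0)
    (huniq : ∀ r ∈ SP N C, r = (i1, k1) ∨ r = (i2, k2))
    (x y z : ℝ) (hxy : x < y) (hyz : y < z)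
    (hfx : ∑ j ∈ Finset.range (N + 1), C j * a j ^ x = 0)
    (hfy : ∑ j ∈ Finset.range (N + 1), C j * a j ^ y = 0)
    (hfz : ∑ j ∈ Finset.range (N + 1), C j * a j ^ z = 0) : False := by
  have G1 : ∀ p q, p ≤ k1 - 1 → q ≤ k1 - 1 → 0 ≤ C p * C q := by
    intro p q hp hq
    by_contra hcon
    push_neg at hcon
    rcases lt_trichotomy p q with hpq | hpq | hpq
    · obtain ⟨p', q', hp', hpq', hq', hmem⟩ := opp_mem N C hpq (by omega) hcon
      rcases huniq _ hmem with h | h <;> · rw [Prod.ext_iff] at h; simp at h; omega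
    · subst hpq; nlinarith [mul_self_nonneg (C p)]
    · obtain ⟨p', q', hp', hpq', hq', hmem⟩ := opp_mem N C hpq (by omega)
        (by linarith [mul_comm (C p) (C q)])
      rcases huniq _ hmem with h | h <;> · rw [Prod.ext_iff] at h; simp at h; omega
  have G2 : ∀ p q, k1 - 1 < p → p ≤ k2 - 1 → k1 - 1 < q → q ≤ k2 - 1 → 0 ≤ C p * C q := by
    intro p q hp hp2 hq hq2
    by_contra hcon
    push_neg at hcon
    rcases lt_trichotomy p q with hpq | hpq | hpq
    · obtain ⟨p', q', hp', hpq', hq', hmem⟩ := opp_mem N C hpq (by omega) hcon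
      rcases huniq _ hmem with h | h <;> · rw [Prod.ext_iff] at h; simp at h; omega
    · subst hpq; nlinarith [mul_self_nonneg (C p)]
    · obtain ⟨p', q', hp', hpq', hq', hmem⟩ := opp_mem N C hpq (by omega)
        (by linarith [mul_comm (C p) (C q)])
      rcases huniq _ hmem with h | h <;> · rw [Prod.ext_iff] at h; simp at h; omega
  have G3 : ∀ p q, k2 - 1 < p → p ≤ N → k2 - 1 < q → q ≤ N → 0 ≤ C p * C q := by
    intro p q hp hpN hq hqN
    by_contra hcon
    push_neg at hcon
    rcases lt_trichotomy p q with hpq | hpq | hpq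
    · obtain ⟨p', q', hp', hpq', hq', hmem⟩ := opp_mem N C hpq hqN hcon
      rcases huniq _ hmem with h | h <;> · rw [Prod.ext_iff] at h; simp at h; omega
    · subst hpq; nlinarith [mul_self_nonneg (C p)]
    · obtain ⟨p', q', hp', hpq', hq', hmem⟩ := opp_mem N C hpq hpN
        (by linarith [mul_comm (C p) (C q)])
      rcases huniq _ hmem with h | h <;> · rw [Prod.ext_iff] at h; simp at h; omega
  have G4 : ∀ p q, p ≤ k1 - 1 → k1 - 1 < q → q ≤ k2 - 1 → C p * C q ≤ 0 := by
    intro p q hp hq hq2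
    nlinarith [G1 p i1 hp (by omega), G2 k1 q (by omega) (by omega) hq hq2, hC1]
  have G5 : ∀ p q, k1 - 1 < p → p ≤ k2 - 1 → k2 - 1 < q → q ≤ N → C p * C q ≤ 0 := by
    intro p q hp hp2 hq hqN
    nlinarith [G2 p i2 hp hp2 (by omega) (by omega), G3 k2 q (by omega) hk2N hq hqN, hC2]
  have G6 : ∀ p q, p ≤ k1 - 1 → k2 - 1 < q → q ≤ N → 0 ≤ C p * C q := by
    intro p q hp hq hqN
    have A := G1 p i1 hp (by omega)
    have B := G2 k1 i2 (by omega) (by omega) (by omega) (by omega)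
    have D := G3 k2 q (by omega) hk2N hq hqN
    nlinarith [mul_nonneg (mul_nonneg A B) D, mul_pos_of_neg_of_neg hC1 hC2]
  have hCi2 : C i2 ≠ 0 := (nz_of_neg hC2).1
  exact L2 N a C (k1 - 1) (k2 - 1) (by omega) (by omega) ha_pos ha_anti
    G1 G2 G3 G4 G5 G6 i2 (by omega) (by omega) hCi2 x y z hxy hyz hfx hfy hfz

/-- Key ordered lemma: with at most two sign changes, no three ordered zeros. -/
private lemma key (N : ℕ) (a C : ℕ → ℝ)
    (ha_pos : ∀ j ≤ N, 0 < a j)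
    (ha_anti : ∀ i j, i < j → j ≤ N → a j < a i)
    (hC_ne : ∃ j ≤ N, C j ≠ 0)
    (hsign : (SP N C).card ≤ 2)
    (x y z : ℝ) (hxy : x < y) (hyz : y < z)
    (hfx : ∑ j ∈ Finset.range (N + 1), C j * a j ^ x = 0)
    (hfy : ∑ j ∈ Finset.range (N + 1), C j * a j ^ y = 0)
    (hfz : ∑ j ∈ Finset.range (N + 1), C j * a j ^ z = 0) : False := by
  have hcases : (SP N C).card = 0 ∨ (SP N C).card = 1 ∨ (SP N C).card = 2 := by omega
  rcases hcases with h0 | h1 | h2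
  · -- no sign change: f never vanishes
    have hSP := Finset.card_eq_zero.mp h0
    have hnn : ∀ p q, p ≤ N → q ≤ N → 0 ≤ C p * C q := by
      intro p q hp hq
      by_contra hcon
      push_neg at hcon
      rcases lt_trichotomy p q with hpq | hpq | hpq
      · obtain ⟨p', q', _, _, _, hmem⟩ := opp_mem N C hpq hq hcon
        rw [hSP] at hmem
        exact absurd hmem (Finset.notMem_empty _)
      · subst hpq; nlinarith [mul_self_nonneg (C p)]
      · obtain ⟨p', q', _, _, _, hmem⟩ := opp_mem N C hpq hp (by linarith [mul_comm (C p) (C q)])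
        rw [hSP] at hmem
        exact absurd hmem (Finset.notMem_empty _)
    obtain ⟨m, hm, hm0⟩ := hC_ne
    exact L0 N a C ha_pos hnn m hm hm0 x hfx
  · -- exactly one sign change
    obtain ⟨pr, hSP⟩ := Finset.card_eq_one.mp h1
    obtain ⟨i, k⟩ := pr
    have hprmem : (i, k) ∈ SP N C := by rw [hSP]; exact Finset.mem_singleton_self _
    obtain ⟨hik, hkN, hCik, _⟩ := SP_mem_elim N C hprmem
    simp only at hik hkN hCik
    have huniq : ∀ r ∈ SP N C, r = (i, k) := by
      intro r hr; rw [hSP, Finset.mem_singleton] at hr; exact hr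
    have h1' : ∀ p q, p ≤ k - 1 → q ≤ k - 1 → 0 ≤ C p * C q := by
      intro p q hp hq
      by_contra hcon
      push_neg at hcon
      rcases lt_trichotomy p q with hpq | hpq | hpq
      · obtain ⟨p', q', hp', hpq', hq', hmem⟩ := opp_mem N C hpq (by omega) hcon
        have h' := huniq _ hmem
        rw [Prod.ext_iff] at h'; simp at h'; omega
      · subst hpq; nlinarith [mul_self_nonneg (C p)]
      · obtain ⟨p', q', hp', hpq', hq', hmem⟩ := opp_mem N C hpq (by omega)
          (by linarith [mul_comm (C p) (C q)])
        have h' := huniq _ hmem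
        rw [Prod.ext_iff] at h'; simp at h'; omega
    have h2' : ∀ p q, k - 1 < p → p ≤ N → k - 1 < q → q ≤ N → 0 ≤ C p * C q := by
      intro p q hp hpN hq hqN
      by_contra hcon
      push_neg at hcon
      rcases lt_trichotomy p q with hpq | hpq | hpq
      · obtain ⟨p', q', hp', hpq', hq', hmem⟩ := opp_mem N C hpq hqN hcon
        have h' := huniq _ hmem
        rw [Prod.ext_iff] at h'; simp at h'; omega
      · subst hpq; nlinarith [mul_self_nonneg (C p)]
      · obtain ⟨p', q', hp', hpq', hq', hmem⟩ := opp_mem N C hpq hpN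
          (by linarith [mul_comm (C p) (C q)])
        have h' := huniq _ hmem
        rw [Prod.ext_iff] at h'; simp at h'; omega
    have h3' : ∀ p q, p ≤ k - 1 → k - 1 < q → q ≤ N → C p * C q ≤ 0 := by
      intro p q hp hq hqN
      have hpi := h1' p i hp (by omega)
      have hqk := h2' q k hq hqN (by omega) hkN
      nlinarith [hpi, hqk, hCik]
    have hCi : C i ≠ 0 := by
      intro h; rw [h, zero_mul] at hCik; exact lt_irrefl 0 hCik
    exact L1 N a C (k - 1) (by omega) ha_pos ha_anti h1' h2' h3' i (by omega) hCi
      x y hxy hfx hfy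
  · -- exactly two sign changes
    obtain ⟨u, v, huv, hSP⟩ := Finset.card_eq_two.mp h2
    have humem : u ∈ SP N C := by rw [hSP]; exact Finset.mem_insert_self _ _
    have hvmem : v ∈ SP N C := by
      rw [hSP]; exact Finset.mem_insert_of_mem (Finset.mem_singleton_self _)
    obtain ⟨hu12, hu2N, hCu, hzu⟩ := SP_mem_elim N C humem
    obtain ⟨hv12, hv2N, hCv, hzv⟩ := SP_mem_elim N C hvmem
    have huniq : ∀ r ∈ SP N C, r = u ∨ r = v := by
      intro r hr
      rw [hSP] at hr
      rcases Finset.mem_insert.mp hr with h | h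
      · exact Or.inl h
      · exact Or.inr (Finset.mem_singleton.mp h)
    have hord : u.2 ≤ v.1 ∨ v.2 ≤ u.1 := by
      by_contra hcon
      push_neg at hcon
      rcases lt_trichotomy u.1 v.1 with h | h | h
      · exact (nz_of_neg hCv).1 (hzu v.1 (Finset.mem_Ioo.mpr ⟨h, hcon.1⟩))
      · rcases lt_trichotomy u.2 v.2 with h2 | h2 | h2
        · exact (nz_of_neg hCu).2 (hzv u.2 (Finset.mem_Ioo.mpr ⟨by omega, h2⟩))
        · exact huv (Prod.ext h h2)
        · exact (nz_of_neg hCv).2 (hzu v.2 (Finset.mem_Ioo.mpr ⟨by omega, h2⟩))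
      · exact (nz_of_neg hCu).1 (hzv u.1 (Finset.mem_Ioo.mpr ⟨h, hcon.2⟩))
    rcases hord with hord | hord
    · exact key2 N a C ha_pos ha_anti u.1 u.2 v.1 v.2 hu12 hord hv12 hv2N hCu hCv
        huniq x y z hxy hyz hfx hfy hfz
    · exact key2 N a C ha_pos ha_anti v.1 v.2 u.1 u.2 hv12 hord hu12 hu2N hCv hCu
        (fun r hr => (huniq r hr).symm) x y z hxy hyz hfx hfy hfz

theorem two_sign_changes_two_zeros (N : ℕ) (a C : ℕ → ℝ)
    (ha_pos : ∀ j ≤ N, 0 < a j)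
    (ha_anti : ∀ i j, i < j → j ≤ N → a j < a i)
    (hC_ne : ∃ j ≤ N, C j ≠ 0)
    (hsign : ((Finset.range (N + 1) ×ˢ Finset.range (N + 1)).filter
        (fun p => p.1 < p.2 ∧ C p.1 * C p.2 < 0 ∧
          ∀ j ∈ Finset.Ioo p.1 p.2, C j = 0)).card ≤ 2) :
    ∀ x y z : ℝ,
      (∑ j ∈ Finset.range (N + 1), C j * a j ^ x = 0) →
      (∑ j ∈ Finset.range (N + 1), C j * a j ^ y = 0) →
      (∑ j ∈ Finset.range (N + 1), C j * a j ^ z = 0) →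
      x = y ∨ x = z ∨ y = z := by
  intro x y z hx hy hz
  by_contra hcon
  push_neg at hcon
  obtain ⟨hxy, hxz, hyz⟩ := hcon
  have hsign' : (SP N C).card ≤ 2 := hsign
  have K := key N a C ha_pos ha_anti hC_ne hsign'
  rcases (Ne.lt_or_gt hxy) with h1 | h1 <;> rcases (Ne.lt_or_gt hxz) with h2 | h2 <;>
    rcases (Ne.lt_or_gt hyz) with h3 | h3 <;>
    first
      | exact K x y z (by linarith) (by linarith) hx hy hz
      | exact K x z y (by linarith) (by linarith) hx hz hy
      | exact K y x z (by linarith) (by linarith) hy hx hz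
      | exact K y z x (by linarith) (by linarith) hy hz hx
      | exact K z x y (by linarith) (by linarith) hz hx hy
      | exact K z y x (by linarith) (by linarith) hz hy hx
      | linarith
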